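/- In the ℤ₂ toric code condensation model, every coherent state is a simultaneous eigenvector of the creation operators: for all parameters g₀ ∈ ZMod 2 and h, g : Fin N → ZMod 2, and every n, W_n(e) ψ_{g₀;h,g} = (−1)^{g₀ + g_n} ψ_{g₀;h,g}, where the exponent is computed modulo 2. -/

import Mathlib

/-- The effective Hilbert space of the ℤ₂ toric code condensation model with `N` anyon
sites: functions from (condensate label, per-site (charge, flux)) to `ℂ`. -/
abbrev Hsp (N : ℕ) : Type := (ZMod 2 × (Fin N → ZMod 2 × ZMod 2)) → ℂ

/-- The creation operator `W_n(e)`: `(W_n(e) f)(a, j) = f(a+1, j')` where `j'` agrees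
with `j` except that the charge at site `n` is shifted by 1. -/
noncomputable def wOp (N : ℕ) (n : Fin N) : Hsp N →ₗ[ℂ] Hsp N :=
  LinearMap.funLeft ℂ ℂ
    (fun p => (p.1 + 1, Function.update p.2 n ((p.2 n).1 + 1, (p.2 n).2)))

/-- The coherent state `ψ_{g₀;h,g}` of the toric code condensation model:
`ψ(a,j) = 2^{−(N+1)/2} · (−1)^{g₀·a} · ∏_n (if φ_n = h_n then (−1)^{g_n·c_n} else 0)`. -/
noncomputable def coh (N : ℕ) (g0 : ZMod 2) (h g : Fin N → ZMod 2) : Hsp N :=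
  fun p => (((2 : ℝ) ^ (-(((N : ℝ) + 1) / 2)) : ℝ) : ℂ) *
    (-1 : ℂ) ^ (g0.val * p.1.val) *
    ∏ n : Fin N,
      (if (p.2 n).2 = h n then (-1 : ℂ) ^ ((g n).val * ((p.2 n).1).val) else 0)

/-- every coherent state is a simultaneous eigenvector of the creation
operators: `W_n(e) ψ_{g₀;h,g} = (−1)^{g₀+g_n} ψ_{g₀;h,g}`. -/
theorem wOp_coh_eigen (N : ℕ) (hN : 1 ≤ N)
    (g0 : ZMod 2) (h g : Fin N → ZMod 2) (n : Fin N) :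
    wOp N n (coh N g0 h g) = ((-1 : ℂ) ^ ((g0 + g n).val)) • coh N g0 h g := by
  funext p
  obtain ⟨a, j⟩ := p
  simp only [wOp, coh, LinearMap.funLeft_apply, Pi.smul_apply, smul_eq_mul]
  have hupd : (fun m => (if ((Function.update j n ((j n).1 + 1, (j n).2)) m).2 = h m then
        (-1:ℂ)^((g m).val * (((Function.update j n ((j n).1+1,(j n).2)) m).1).val) else 0))
      = Function.update (fun m => if (j m).2 = h m then
          (-1:ℂ)^((g m).val * ((j m).1).val) else 0) n
        (if (j n).2 = h n then (-1:ℂ)^((g n).val * ((j n).1 + 1).val) else 0) := by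
    funext m
    by_cases hm : m = n
    · subst hm; simp
    · simp [Function.update_of_ne hm]
  rw [hupd, Finset.prod_update_of_mem (Finset.mem_univ n),
    ← Finset.mul_prod_erase Finset.univ
      (fun m => if (j m).2 = h m then (-1:ℂ)^((g m).val * ((j m).1).val) else 0)
      (Finset.mem_univ n)]
  by_cases hc : (j n).2 = h n
  · simp only [hc, if_pos rfl, if_true]
    have key : (-1:ℂ)^(g0.val*(a+1).val) * (-1:ℂ)^((g n).val*((j n).1+1).val)
        = (-1:ℂ)^((g0 + g n).val) * ((-1:ℂ)^(g0.val*a.val) * (-1:ℂ)^((g n).val*((j n).1).val)) := by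
      have gen : ∀ x y u v : ZMod 2, (-1:ℂ)^(x.val*(y+1).val) * (-1:ℂ)^(u.val*(v+1).val)
          = (-1:ℂ)^((x+u).val) * ((-1:ℂ)^(x.val*y.val) * (-1:ℂ)^(u.val*v.val)) := by
        intro x y u v
        have h01 : ∀ z : ZMod 2, z = 0 ∨ z = 1 := by decide
        rcases h01 x with rfl | rfl <;> rcases h01 y with rfl | rfl <;>
          rcases h01 u with rfl | rfl <;> rcases h01 v with rfl | rfl <;>
          norm_num [show (2:ZMod 2).val = 0 from rfl, show (1:ZMod 2).val = 1 from rfl,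
            show (0:ZMod 2).val = 0 from rfl]
      exact gen g0 a (g n) (j n).1
    simp only [Finset.sdiff_singleton_eq_erase]
    linear_combination ((((2:ℝ) ^ (-(((N:ℝ)+1)/2)) : ℝ) : ℂ) *
      ∏ m ∈ Finset.univ.erase n,
        (if (j m).2 = h m then (-1:ℂ)^((g m).val * ((j m).1).val) else 0)) * key
  · simp [hc]
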